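/- For almost every (x₁,…,x_k) ∈ [0,1)^k (with respect to Lebesgue measure), the following holds: for every open set U ⊆ K containing f(x₁,…,x_k), the limit as m → ∞ of m^k · μ(f⁻¹(U) ∩ ∏_{i=1}^k Δ_m(x_i)) equals 1, where Δ_m(x) denotes the unique dyadic-style interval [s/m,(s+1)/m) containing x. -/

import Mathlib

open MeasureTheory Filter Set Metric

noncomputable def dyadicIval (m : ℕ) (x : ℝ) : Set ℝ :=
  Set.Ico ((⌊(m : ℝ) * x⌋ : ℝ) / m) (((⌊(m : ℝ) * x⌋ : ℝ) + 1) / m)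

variable {k : ℕ}

noncomputable def cQ (m : ℕ) (x : Fin k → ℝ) : Set (Fin k → ℝ) :=
  Set.univ.pi fun i => Set.Icc ((⌊(m : ℝ) * x i⌋ : ℝ) / m) (((⌊(m : ℝ) * x i⌋ : ℝ) + 1) / m)

lemma vol_cQ (m : ℕ) (hm : 0 < m) (x : Fin k → ℝ) :
    volume (cQ m x) = ((m : ENNReal)⁻¹) ^ k := by
  have hmpos : (0:ℝ) < m := Nat.cast_pos.2 hm
  rw [cQ, volume_pi_pi]
  have : ∀ i : Fin k, volume (Set.Icc ((⌊(m : ℝ) * x i⌋ : ℝ) / m) (((⌊(m : ℝ) * x i⌋ : ℝ) + 1) / m))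
      = (m : ENNReal)⁻¹ := by
    intro i
    rw [Real.volume_Icc]
    have : ((⌊(m : ℝ) * x i⌋ : ℝ) + 1) / m - (⌊(m : ℝ) * x i⌋ : ℝ) / m = (m : ℝ)⁻¹ := by
      field_simp
      ring
    rw [this, ← ENNReal.ofReal_natCast m, ← ENNReal.ofReal_inv_of_pos hmpos]
  simp [this]

lemma vol_Q (m : ℕ) (hm : 0 < m) (x : Fin k → ℝ) :
    volume (Set.univ.pi fun i => dyadicIval m (x i)) = ((m : ENNReal)⁻¹) ^ k := by
  have hmpos : (0:ℝ) < m := Nat.cast_pos.2 hm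
  rw [volume_pi_pi]
  have : ∀ i : Fin k, volume (dyadicIval m (x i)) = (m : ENNReal)⁻¹ := by
    intro i
    rw [dyadicIval, Real.volume_Ico]
    have : ((⌊(m : ℝ) * x i⌋ : ℝ) + 1) / m - (⌊(m : ℝ) * x i⌋ : ℝ) / m = (m : ℝ)⁻¹ := by
      field_simp
      ring
    rw [this, ← ENNReal.ofReal_natCast m, ← ENNReal.ofReal_inv_of_pos hmpos]
  simp [this]

lemma Q_subset_cQ (m : ℕ) (x : Fin k → ℝ) :
    (Set.univ.pi fun i => dyadicIval m (x i)) ⊆ cQ m x :=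
  Set.pi_mono fun i _ => Set.Ico_subset_Icc_self

lemma vol_inter_eq (m : ℕ) (hm : 0 < m) (x : Fin k → ℝ) (s : Set (Fin k → ℝ)) :
    volume (s ∩ Set.univ.pi fun i => dyadicIval m (x i)) = volume (s ∩ cQ m x) := by
  have hQ : MeasurableSet (Set.univ.pi fun i => dyadicIval m (x i)) :=
    MeasurableSet.univ_pi fun i => measurableSet_Ico
  have hdiff : volume (cQ m x \ Set.univ.pi fun i => dyadicIval m (x i)) = 0 := by
    have h1 := measure_diff (Q_subset_cQ m x) hQ.nullMeasurableSet
      (by rw [vol_Q m hm x]; exact ENNReal.pow_ne_top (ENNReal.inv_ne_top.2 (by simp [hm.ne'])))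
    rw [h1, vol_cQ m hm x, vol_Q m hm x, tsub_self]
  refine le_antisymm (measure_mono (Set.inter_subset_inter_right _ (Q_subset_cQ m x))) ?_
  calc volume (s ∩ cQ m x)
      ≤ volume ((s ∩ Set.univ.pi fun i => dyadicIval m (x i)) ∪
          (cQ m x \ Set.univ.pi fun i => dyadicIval m (x i))) := by
        apply measure_mono
        rintro y ⟨hy1, hy2⟩
        by_cases h : y ∈ Set.univ.pi fun i => dyadicIval m (x i)
        · exact Or.inl ⟨hy1, h⟩
        · exact Or.inr ⟨hy2, h⟩
    _ ≤ volume (s ∩ Set.univ.pi fun i => dyadicIval m (x i)) + 0 := by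
        rw [← hdiff]; exact measure_union_le _ _
    _ = _ := by rw [add_zero]

lemma mem_Q (m : ℕ) (hm : 0 < m) (x : Fin k → ℝ) :
    x ∈ Set.univ.pi fun i => dyadicIval m (x i) := by
  intro i _
  have hmpos : (0:ℝ) < m := Nat.cast_pos.2 hm
  constructor
  · rw [div_le_iff₀ hmpos]; rw [mul_comm]; exact Int.floor_le _
  · rw [lt_div_iff₀ hmpos]; rw [mul_comm]; exact Int.lt_floor_add_one _

lemma cQ_subset_ball (m : ℕ) (hm : 0 < m) (x : Fin k → ℝ) :
    cQ m x ⊆ closedBall x ((m:ℝ)⁻¹) := by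
  intro y hy
  have hmpos : (0:ℝ) < m := Nat.cast_pos.2 hm
  rw [mem_closedBall, dist_pi_le_iff (by positivity)]
  intro i
  have hxi : x i ∈ Set.Icc ((⌊(m : ℝ) * x i⌋ : ℝ) / m) (((⌊(m : ℝ) * x i⌋ : ℝ) + 1) / m) :=
    Set.Ico_subset_Icc_self (mem_Q m hm x i (Set.mem_univ i))
  have := Real.dist_le_of_mem_Icc (hy i (Set.mem_univ i)) hxi
  apply this.trans
  rw [le_iff_lt_or_eq]; right; field_simp; ring

lemma vol_cb (x : Fin k → ℝ) {r : ℝ} (hr : 0 ≤ r) :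
    volume (closedBall x r) = (ENNReal.ofReal (2*r)) ^ k := by
  rw [closedBall_pi _ hr, volume_pi_pi]
  have : ∀ i : Fin k, volume (closedBall (x i) r) = ENNReal.ofReal (2*r) := by
    intro i
    rw [Real.closedBall_eq_Icc, Real.volume_Icc]
    ring_nf
  simp [this]

lemma doubling (x : Fin k → ℝ) :
    ∃ᶠ r in nhdsWithin 0 (Set.Ioi 0),
      volume (closedBall x (3 * r)) ≤ ((6:NNReal) ^ k : NNReal) * volume (closedBall x r) := by
  apply Eventually.frequently
  filter_upwards [self_mem_nhdsWithin] with r (hr : 0 < r)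
  rw [vol_cb x (by positivity), vol_cb x hr.le]
  have h1 : (2:ℝ) * (3 * r) = 3 * (2 * r) := by ring
  rw [h1, ENNReal.ofReal_mul (by norm_num), mul_pow]
  have h2 : ((6:NNReal) ^ k : NNReal) = ((6:ENNReal)) ^ k := by push_cast; ring
  rw [h2]
  gcongr
  calc ENNReal.ofReal 3 ≤ ENNReal.ofReal 6 := by gcongr <;> norm_num
    _ = 6 := by norm_num [ENNReal.ofReal_ofNat]

noncomputable def vf (k : ℕ) : VitaliFamily (volume : Measure (Fin k → ℝ)) :=
  Vitali.vitaliFamily volume ((6:NNReal) ^ k) doubling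

lemma cQ_mem_setsAt (m : ℕ) (hm : 0 < m) (x : Fin k → ℝ) :
    cQ m x ∈ (vf k).setsAt x := by
  have hmpos : (0:ℝ) < m := Nat.cast_pos.2 hm
  refine ⟨isClosed_set_pi fun i _ => isClosed_Icc, ?_, (m:ℝ)⁻¹, cQ_subset_ball m hm x, ?_⟩
  · refine ⟨(fun i => ((⌊(m : ℝ) * x i⌋ : ℝ) + 2⁻¹) / m), ?_⟩
    rw [cQ, interior_pi_set Set.finite_univ]
    intro i _
    simp only [interior_Icc, Set.mem_Ioo]
    constructor
    · rw [div_lt_div_iff_of_pos_right hmpos]; norm_num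
    · rw [div_lt_div_iff_of_pos_right hmpos]; norm_num
  · rw [vol_cb x (by positivity), vol_cQ m hm x]
    have h1 : (2:ℝ) * (3 * (m:ℝ)⁻¹) = 6 * (m:ℝ)⁻¹ := by ring
    rw [h1, ENNReal.ofReal_mul (by norm_num), mul_pow]
    have h2 : ((6:NNReal) ^ k : NNReal) = ((6:ENNReal)) ^ k := by push_cast; ring
    have h3 : ENNReal.ofReal ((m:ℝ)⁻¹) = ((m:ENNReal))⁻¹ := by
      rw [ENNReal.ofReal_inv_of_pos hmpos, ENNReal.ofReal_natCast]
    rw [h2, h3]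
    gcongr
    calc ENNReal.ofReal 6 = 6 := by norm_num
      _ ≤ 6 := le_refl _

lemma tendsto_cQ (x : Fin k → ℝ) :
    Tendsto (fun m : ℕ => cQ m x) atTop ((vf k).filterAt x) := by
  rw [VitaliFamily.tendsto_filterAt_iff]
  constructor
  · filter_upwards [eventually_gt_atTop 0] with m hm
    exact cQ_mem_setsAt m hm x
  · intro ε hε
    obtain ⟨N, hN⟩ := exists_nat_gt ε⁻¹
    filter_upwards [eventually_ge_atTop (N + 1)] with m hm
    have hm0 : 0 < m := by omega
    refine (cQ_subset_ball m hm0 x).trans (closedBall_subset_closedBall ?_)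
    have hNm : ε⁻¹ < (m:ℝ) := hN.trans_le (by exact_mod_cast Nat.le_of_succ_le hm)
    rw [inv_le_comm₀ (Nat.cast_pos.2 hm0) hε]
    exact hNm.le

lemma density (s : Set (Fin k → ℝ)) (hs : MeasurableSet s) :
    ∀ᵐ x ∂(volume : Measure (Fin k → ℝ)), x ∈ s →
      Tendsto (fun m : ℕ => (m : ENNReal) ^ k *
        volume (s ∩ Set.univ.pi fun i => dyadicIval m (x i))) atTop (nhds 1) := by
  have h := (vf k).ae_tendsto_measure_inter_div s
  rw [ae_restrict_iff' hs] at h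
  filter_upwards [h] with x hx hxs
  have h2 := (hx hxs).comp (tendsto_cQ x)
  apply h2.congr'
  filter_upwards [eventually_gt_atTop 0] with m hm
  have hm0 : (m : ENNReal) ≠ 0 := by exact_mod_cast hm.ne'
  simp only [Function.comp_apply]
  rw [vol_cQ m hm x, ← vol_inter_eq m hm x s, ENNReal.div_eq_inv_mul,
    ENNReal.inv_pow, inv_inv]

lemma pi_restrict_eq :
    (Measure.pi fun _ : Fin k => volume.restrict (Set.Ico (0:ℝ) 1)) =
      (volume : Measure (Fin k → ℝ)).restrict (Set.univ.pi fun _ => Set.Ico (0:ℝ) 1) := by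
  refine Measure.pi_eq fun s hs => ?_
  rw [Measure.restrict_apply (MeasurableSet.univ_pi hs), ← Set.pi_inter_distrib,
    volume_pi_pi]
  exact Finset.prod_congr rfl fun i _ => (Measure.restrict_apply (hs i)).symm

theorem stmt0 {K : Type*} [MetricSpace K] [CompactSpace K]
    [MeasurableSpace K] [BorelSpace K]
    (k : ℕ) (hk : 0 < k) (f : (Fin k → ℝ) → K) (hf : Measurable f) :
    ∀ᵐ x ∂(Measure.pi fun _ : Fin k => volume.restrict (Set.Ico (0:ℝ) 1)),
      ∀ U : Set K, IsOpen U → f x ∈ U →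
        Tendsto
          (fun m : ℕ =>
            (m : ENNReal) ^ k *
              volume (f ⁻¹' U ∩ Set.univ.pi fun i => dyadicIval m (x i)))
          atTop (nhds 1) := by
  rw [pi_restrict_eq]
  apply ae_restrict_of_ae
  haveI : SecondCountableTopology K := inferInstance
  have hB := TopologicalSpace.isBasis_countableBasis K
  have key : ∀ᵐ x ∂(volume : Measure (Fin k → ℝ)),
      ∀ V ∈ TopologicalSpace.countableBasis K, x ∈ f ⁻¹' V →
        Tendsto (fun m : ℕ => (m : ENNReal) ^ k *
          volume (f ⁻¹' V ∩ Set.univ.pi fun i => dyadicIval m (x i))) atTop (nhds 1) :=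
    (ae_ball_iff (TopologicalSpace.countable_countableBasis K)).2 fun V hV =>
      density (f ⁻¹' V) (hf (TopologicalSpace.isOpen_of_mem_countableBasis hV).measurableSet)
  filter_upwards [key] with x hx U hU hfxU
  obtain ⟨V, hVB, hfxV, hVU⟩ := hB.exists_subset_of_mem_open hfxU hU
  have h1 := hx V hVB hfxV
  apply tendsto_of_tendsto_of_tendsto_of_le_of_le' h1 tendsto_const_nhds
  · filter_upwards with m
    exact mul_le_mul_right (measure_mono (Set.inter_subset_inter_left _ (Set.preimage_mono hVU))) _
  · filter_upwards [eventually_gt_atTop 0] with m hm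
    have hm0 : (m : ENNReal) ≠ 0 := by exact_mod_cast hm.ne'
    calc (m : ENNReal) ^ k * volume (f ⁻¹' U ∩ Set.univ.pi fun i => dyadicIval m (x i))
        ≤ (m : ENNReal) ^ k * volume (Set.univ.pi fun i => dyadicIval m (x i)) :=
          mul_le_mul_right (measure_mono Set.inter_subset_right) _
      _ = 1 := by
          rw [vol_Q m hm x, ← mul_pow, ENNReal.mul_inv_cancel hm0 (ENNReal.natCast_ne_top m),
            one_pow]
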